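/- arXiv:2101.11411 — 2 statements merged into one kernel-verified Lean document; each statement's English description precedes it below -/
import Mathlib

section
/- There exists a weight sequence M : ℕ → ℝ in the class LC, with quotients μ_p, such that liminf_{p→∞} (M_{2p})^{1/(2p)} / (M_p)^{1/p} ≥ 2 > 1 (hence the associated weight function ω_M satisfies (ω1)), while for every integer Q ≥ 2 one has liminf_{p→∞} μ_{Q·p}/μ_p = 1, i.e. condition (β3) fails for M. -/
open Filter Real Asymptotics

/-- The associated weight function of a weight sequence `M`. -/
noncomputable def omegaM (M : ℕ → ℝ) (t : ℝ) : ℝ :=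
  if t = 0 then 0 else ⨆ p : ℕ, Real.log (t ^ p / M p)

/-- The class `LC`: positive, normalized, log-convex weight sequences whose
`p`-th roots tend to infinity. -/
def IsLC (M : ℕ → ℝ) : Prop :=
  (∀ p, 0 < M p) ∧ M 0 = 1 ∧ M 0 ≤ M 1 ∧
  (∀ p : ℕ, 1 ≤ p → (M p) ^ 2 ≤ M (p - 1) * M (p + 1)) ∧
  Filter.Tendsto (fun p : ℕ => (M p) ^ (1 / (p : ℝ))) Filter.atTop Filter.atTop

/-- The quotient sequence `μ_0 = 1`, `μ_p = M_p / M_{p-1}`. -/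
noncomputable def mu (M : ℕ → ℝ) (p : ℕ) : ℝ :=
  if p = 0 then 1 else M p / M (p - 1)

/-- Moderate growth `(mg)`. -/
def HasMG (M : ℕ → ℝ) : Prop :=
  ∃ C : ℝ, 1 ≤ C ∧ ∀ p q : ℕ, M (p + q) ≤ C ^ (p + q) * M p * M q

/-- `m_p := M_p / p!`. -/
noncomputable def mseq (M : ℕ → ℝ) (p : ℕ) : ℝ := M p / (Nat.factorial p)

/-- Young conjugate of `x ↦ ω_M(eˣ)`. -/
noncomputable def phiStar (M : ℕ → ℝ) (y : ℝ) : ℝ :=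
  sSup ((fun x => x * y - omegaM M (Real.exp x)) '' Set.Ici (0 : ℝ))

/-- The weight matrix associated with `ω_M`: `M^{(l)}_p := exp((1/l)·φ*(l·p))`. -/
noncomputable def MMat (M : ℕ → ℝ) (l : ℝ) (p : ℕ) : ℝ :=
  Real.exp ((1 / l) * phiStar M (l * p))

/-- `m^{(l)}_p := M^{(l)}_p / p!`. -/
noncomputable def mMat (M : ℕ → ℝ) (l : ℝ) (p : ℕ) : ℝ :=
  MMat M l p / (Nat.factorial p)

/-- The Roumieu root-almost-increasing condition `(M_{rai})` for the weight matrix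
associated with `ω_M`. -/
def MRai (M : ℕ → ℝ) : Prop :=
  ∀ x : ℝ, 0 < x → ∃ C : ℝ, 0 < C ∧ ∃ y : ℝ, 0 < y ∧
    ∀ p q : ℕ, 1 ≤ p → p ≤ q →
      (mMat M x p) ^ (1 / (p : ℝ)) ≤ C * (mMat M y q) ^ (1 / (q : ℝ))

/-- `M ≼ N` : `sup_{p ≥ 1} (M_p/N_p)^{1/p} < ∞`. -/
def Precsim (M N : ℕ → ℝ) : Prop :=
  ∃ A : ℝ, ∀ p : ℕ, 1 ≤ p → (M p / N p) ^ (1 / (p : ℝ)) ≤ A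

/-- `M ≈ N` : mutual `≼`. -/
def Approx (M N : ℕ → ℝ) : Prop := Precsim M N ∧ Precsim N M

/-- Condition `(ω1)` for a weight function. -/
def Omega1 (w : ℝ → ℝ) : Prop :=
  ∃ L : ℝ, 1 ≤ L ∧ ∀ t : ℝ, 0 ≤ t → w (2 * t) ≤ L * (w t + 1)

/-- Condition `(α0)` (in the rewritten form valid for all `t ≥ 0`). -/
def Alpha0 (w : ℝ → ℝ) : Prop :=
  ∃ C : ℝ, 1 ≤ C ∧ ∃ D : ℝ, 1 ≤ D ∧ ∀ lam : ℝ, 1 ≤ lam → ∀ t : ℝ, 0 ≤ t →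
    w (lam * t) ≤ C * lam * w t + D * lam


def sl (p : ℕ) : ℕ := 4 ^ (Nat.sqrt (Nat.log 2 p) + 2)

def Ee (p : ℕ) : ℕ := ∑ i ∈ Finset.range p, sl (i + 1)

lemma sl_mono : Monotone sl := fun a b h =>
  Nat.pow_le_pow_right (by norm_num)
    (Nat.add_le_add_right (Nat.sqrt_le_sqrt (Nat.log_mono_right h)) 2)

lemma Ee_add (m n : ℕ) : Ee (m + n) = Ee m + ∑ i ∈ Finset.range n, sl (m + i + 1) := by
  simpa [Ee] using Finset.sum_range_add (fun i => sl (i + 1)) m n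

lemma Ee_succ (m : ℕ) : Ee (m + 1) = Ee m + sl (m + 1) := by
  simp [Ee, Finset.sum_range_succ]

lemma key (p : ℕ) (hp : 1 ≤ p) : 2 * Ee p + 2 * p ≤ Ee (2 * p) := by
  rcases eq_or_lt_of_le hp with h1 | h2
  · -- p = 1
    have : p = 1 := h1.symm
    subst this
    have l2 : Nat.log 2 2 = 1 := Nat.log_eq_of_pow_le_of_lt_pow (by norm_num) (by norm_num)
    have l1 : Nat.log 2 1 = 0 := Nat.log_one_right 2
    have e2 : Ee 2 = 80 := by
      show sl 1 + (sl 2 + 0) = 80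
      simp [sl, l1, l2]
    have e1 : Ee 1 = 16 := by
      show sl 1 + 0 = 16
      simp [sl, l1]
    rw [show 2 * 1 = 2 from rfl, e2, e1]
    norm_num
  · -- p ≥ 2
    have hp2 : 2 ≤ p := h2
    set k := Nat.sqrt (Nat.log 2 p) with hkdef
    have hk1 : 1 ≤ k := Nat.le_sqrt.2 (by simpa using Nat.le_log_of_pow_le one_lt_two (by simpa using hp2))
    set a := 2 ^ (k * k) with hadef
    set A := 2 ^ ((k + 1) * (k + 1)) with hAdef
    set v := 4 ^ (k + 2) with hvdef
    have hap : a ≤ p := by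
      calc a ≤ 2 ^ (Nat.log 2 p) := Nat.pow_le_pow_right (by norm_num)
              (by simpa [pow_two] using Nat.sqrt_le' (Nat.log 2 p))
        _ ≤ p := Nat.pow_log_le_self 2 (by omega)
    have hpA : p < A := by
      calc p < 2 ^ (Nat.log 2 p + 1) := Nat.lt_pow_succ_log_self one_lt_two p
        _ ≤ A := Nat.pow_le_pow_right (by norm_num) (by
            have := Nat.lt_succ_sqrt' (Nat.log 2 p)
            simpa [pow_two, Nat.succ_eq_add_one] using this)
    have hsmall : ∀ j : ℕ, 1 ≤ j → j < a → sl j ≤ 4 ^ (k + 1) := by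
      intro j h1j hja
      have hlog : Nat.log 2 j < k * k := Nat.log_lt_of_lt_pow (by omega) hja
      have : Nat.sqrt (Nat.log 2 j) < k := Nat.sqrt_lt'.2 (by simpa [pow_two] using hlog)
      exact Nat.pow_le_pow_right (by norm_num) (by omega)
    have hbig : ∀ j : ℕ, A ≤ j → v + 1 ≤ sl j := by
      intro j hAj
      have hj0 : j ≠ 0 := by
        have : 0 < A := Nat.pow_pos (by norm_num)
        omega
      have hlog : (k + 1) * (k + 1) ≤ Nat.log 2 j :=
        (Nat.le_log_iff_pow_le one_lt_two hj0).2 hAj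
      have hsq : k + 1 ≤ Nat.sqrt (Nat.log 2 j) := Nat.le_sqrt.2 hlog
      have : 4 ^ (k + 3) ≤ sl j := Nat.pow_le_pow_right (by norm_num) (by omega)
      have h4 : v + 1 ≤ 4 ^ (k + 3) := by
        have : 4 ^ (k + 3) = 4 * v := by rw [hvdef, ← pow_succ']
        rw [this]
        have hv1 : 1 ≤ v := Nat.one_le_pow _ _ (by norm_num)
        omega
      omega
    -- sums
    set Sf := ∑ i ∈ Finset.range p, sl (p + i + 1) with hSf
    set X := ∑ i ∈ Finset.range (a - 1), (v - sl (i + 1)) with hX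
    have hEsplit : Ee (2 * p) = Ee p + Sf := by
      rw [two_mul, Ee_add]
    have hslp : sl p = v := rfl
    -- A1 : Ee p + X ≤ p * v
    have hA1 : Ee p + X ≤ p * v := by
      have hsub : a - 1 ≤ p := by omega
      have hEp : Ee p = Ee (a - 1) + ∑ i ∈ Finset.range (p - (a - 1)), sl ((a - 1) + i + 1) := by
        rw [← Ee_add, Nat.add_sub_cancel' hsub]
      have h1 : Ee (a - 1) + X = (a - 1) * v := by
        rw [Ee, hX, ← Finset.sum_add_distrib]
        have hpt : ∀ i ∈ Finset.range (a - 1), sl (i + 1) + (v - sl (i + 1)) = v := by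
          intro i hi
          have hi' : i + 1 ≤ p := by
            have := Finset.mem_range.1 hi
            omega
          have : sl (i + 1) ≤ v := by rw [← hslp]; exact sl_mono hi'
          omega
        rw [Finset.sum_congr rfl hpt, Finset.sum_const, smul_eq_mul, Finset.card_range]
      have h2 : ∑ i ∈ Finset.range (p - (a - 1)), sl ((a - 1) + i + 1) ≤ (p - (a - 1)) * v := by
        have := Finset.sum_le_card_nsmul (Finset.range (p - (a - 1)))
          (fun i => sl ((a - 1) + i + 1)) v (fun i hi => by
            have hi' := Finset.mem_range.1 hi
            have : (a - 1) + i + 1 ≤ p := by omega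
            rw [← hslp]; exact sl_mono this)
        simpa [smul_eq_mul, Nat.mul_comm] using this
      calc Ee p + X = (Ee (a - 1) + X) + ∑ i ∈ Finset.range (p - (a - 1)), sl ((a - 1) + i + 1) := by
            rw [hEp]; ring
        _ ≤ (a - 1) * v + (p - (a - 1)) * v := by rw [h1]; omega
        _ = p * v := by rw [← Nat.add_mul, Nat.add_sub_cancel' hsub]
    -- A2 : p * v + (2 * p + 1 - A) ≤ Sf
    have hA2 : p * v + (2 * p + 1 - A) ≤ Sf := by
      by_cases hA : 2 * p + 1 ≤ A
      · have hc : 2 * p + 1 - A = 0 := by omega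
        rw [hc, Nat.add_zero]
        have := Finset.card_nsmul_le_sum (Finset.range p) (fun i => sl (p + i + 1)) v
          (fun i _ => by rw [← hslp]; exact sl_mono (by omega))
        simpa [smul_eq_mul, Nat.mul_comm] using this
      · push_neg at hA
        set m := A - p - 1 with hm
        have hmp : m < p := by omega
        have hSfsplit : Sf = (∑ i ∈ Finset.range m, sl (p + i + 1))
            + ∑ i ∈ Finset.range (p - m), sl (p + (m + i) + 1) := by
          have hsplit := Finset.sum_range_add (fun i => sl (p + i + 1)) m (p - m)
          rw [show m + (p - m) = p from by omega] at hsplit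
          exact hsplit
        have h1 : m * v ≤ ∑ i ∈ Finset.range m, sl (p + i + 1) := by
          have := Finset.card_nsmul_le_sum (Finset.range m) (fun i => sl (p + i + 1)) v
            (fun i _ => by rw [← hslp]; exact sl_mono (by omega))
          simpa [smul_eq_mul, Nat.mul_comm] using this
        have h2 : (p - m) * (v + 1) ≤ ∑ i ∈ Finset.range (p - m), sl (p + (m + i) + 1) := by
          have := Finset.card_nsmul_le_sum (Finset.range (p - m))
            (fun i => sl (p + (m + i) + 1)) (v + 1)
            (fun i _ => hbig _ (by omega))
          simpa [smul_eq_mul, Nat.mul_comm] using this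
        have hkey : m * v + (p - m) * (v + 1) = p * v + (p - m) := by
          have : (p - m) * (v + 1) = (p - m) * v + (p - m) := by ring
          rw [this, ← Nat.add_assoc, ← Nat.add_mul, Nat.add_sub_cancel' hmp.le]
        omega
    -- A3 : A - 1 ≤ X
    have hA3 : A - 1 ≤ X := by
      have ha2 : 2 ≤ a := by
        have : (2:ℕ) ^ 1 ≤ 2 ^ (k * k) := Nat.pow_le_pow_right (by norm_num) (by nlinarith)
        simpa using this
      have hterm : ∀ i ∈ Finset.range (a - 1), 3 * 4 ^ (k + 1) ≤ v - sl (i + 1) := by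
        intro i hi
        have hi' := Finset.mem_range.1 hi
        have hs := hsmall (i + 1) (by omega) (by omega)
        have hv4 : v = 4 * 4 ^ (k + 1) := by rw [hvdef, ← pow_succ']
        omega
      have h1 : (a - 1) * (3 * 4 ^ (k + 1)) ≤ X := by
        have := Finset.card_nsmul_le_sum (Finset.range (a - 1))
          (fun i => v - sl (i + 1)) (3 * 4 ^ (k + 1)) hterm
        simpa [smul_eq_mul, Nat.mul_comm] using this
      have hN1 : A ≤ (a - 1) * (3 * 4 ^ (k + 1)) := by
        have hkk : 1 ≤ k * k := Nat.one_le_iff_ne_zero.2 (by positivity)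
        obtain ⟨K, hK⟩ : ∃ K, k * k = K + 1 := ⟨k * k - 1, by omega⟩
        have h4 : (4:ℕ) ^ (k + 1) = 2 ^ (2 * k + 2) := by
          rw [show (4:ℕ) = 2 ^ 2 by norm_num, ← pow_mul]
          congr 1
        have hhalf : 2 ^ K ≤ a - 1 := by
          have h2a : a = 2 ^ K * 2 := by rw [hadef, hK, pow_succ]
          have hpos : 1 ≤ (2:ℕ) ^ K := Nat.one_le_two_pow
          omega
        have hA' : A = 2 ^ K * 4 ^ (k + 1) := by
          rw [hAdef, h4, ← pow_add]
          congr 1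
          rw [show (k + 1) * (k + 1) = k * k + (2 * k + 1) by ring, hK]
          ring
        calc A = 2 ^ K * 4 ^ (k + 1) := hA'
          _ ≤ (a - 1) * 4 ^ (k + 1) := Nat.mul_le_mul hhalf (le_refl _)
          _ ≤ (a - 1) * (3 * 4 ^ (k + 1)) := Nat.mul_le_mul (le_refl _) (by omega)
      omega
    have hA0 : 1 ≤ A := Nat.one_le_two_pow
    omega

noncomputable def Mex (p : ℕ) : ℝ := (2:ℝ) ^ (Ee p)

lemma Mex_pos (p : ℕ) : 0 < Mex p := by unfold Mex; positivity

lemma Ee_mono : Monotone Ee := fun a b h =>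
  Finset.sum_le_sum_of_subset (Finset.range_subset_range.2 h)

lemma Mex_mono : Monotone Mex := fun a b h =>
  pow_le_pow_right₀ one_le_two (Ee_mono h)

lemma Ee_one : Ee 1 = 16 := by
  show sl 1 + 0 = 16
  simp [sl, Nat.log_one_right]

lemma root_eq (p : ℕ) : (Mex p) ^ (1/(p:ℝ)) = (2:ℝ) ^ ((Ee p : ℝ)/(p:ℝ)) := by
  rw [Mex, ← Real.rpow_natCast 2 (Ee p), ← Real.rpow_mul (by norm_num), mul_one_div]

lemma sl_big (K : ℕ) : ∀ j, 2 ^ (2*K*(2*K)) ≤ j → 2*K ≤ sl j := by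
  intro j hj
  have hpos : 1 ≤ (2:ℕ) ^ (2*K*(2*K)) := Nat.one_le_two_pow
  have hj0 : j ≠ 0 := by omega
  have hlog : 2*K*(2*K) ≤ Nat.log 2 j := (Nat.le_log_iff_pow_le one_lt_two hj0).2 hj
  have hsq : 2*K ≤ Nat.sqrt (Nat.log 2 j) := Nat.le_sqrt.2 hlog
  have h1 : 2*K < 2 ^ (2*K) := Nat.lt_two_pow_self (n := 2*K)
  have h2 : (2:ℕ) ^ (2*K) ≤ 4 ^ (2*K) := Nat.pow_le_pow_left (by norm_num) _
  have h3 : (4:ℕ) ^ (2*K) ≤ 4 ^ (Nat.sqrt (Nat.log 2 j) + 2) :=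
    Nat.pow_le_pow_right (by norm_num) (by omega)
  unfold sl
  omega

lemma Ee_growth (K : ℕ) : ∃ N : ℕ, 1 ≤ N ∧ ∀ p, N ≤ p → K * p ≤ Ee p := by
  set P := 2 ^ (2*K*(2*K)) with hP
  have hP1 : 1 ≤ P := Nat.one_le_two_pow
  refine ⟨2*P, by omega, ?_⟩
  intro p hp
  have hEp : Ee p = Ee P + ∑ i ∈ Finset.range (p - P), sl (P + i + 1) := by
    rw [← Ee_add, Nat.add_sub_cancel' (by omega)]
  have hsum : (p - P) * (2*K) ≤ ∑ i ∈ Finset.range (p - P), sl (P + i + 1) := by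
    have := Finset.card_nsmul_le_sum (Finset.range (p - P)) (fun i => sl (P + i + 1)) (2*K)
      (fun i _ => sl_big K _ (by omega))
    simpa [smul_eq_mul, Nat.mul_comm] using this
  have hfin : K * p ≤ (p - P) * (2 * K) := by
    have h2 : p ≤ 2 * (p - P) := by omega
    calc K * p ≤ K * (2 * (p - P)) := Nat.mul_le_mul_left _ h2
      _ = (p - P) * (2 * K) := by ring
  omega

lemma root_tendsto : Filter.Tendsto (fun p : ℕ => (Mex p) ^ (1/(p:ℝ)))
    Filter.atTop Filter.atTop := by
  rw [Filter.tendsto_atTop]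
  intro b
  obtain ⟨n, hn⟩ := exists_nat_gt b
  have hb2 : b ≤ (2:ℝ) ^ (n:ℕ) := by
    have h1 : (n:ℝ) < (2:ℝ) ^ (n:ℕ) := by
      have := Nat.lt_two_pow_self (n := n)
      exact_mod_cast this
    linarith
  obtain ⟨N, hN1, hN⟩ := Ee_growth n
  filter_upwards [Filter.eventually_ge_atTop N] with p hp
  have hp1 : 1 ≤ p := le_trans hN1 hp
  have hp0 : (0:ℝ) < p := by exact_mod_cast hp1
  rw [root_eq]
  have hexp : ((n:ℕ):ℝ) ≤ (Ee p : ℝ)/(p:ℝ) := by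
    rw [le_div_iff₀ hp0]
    have := hN p hp
    calc ((n:ℕ):ℝ) * p = ((n * p : ℕ) : ℝ) := by push_cast; ring
      _ ≤ (Ee p : ℝ) := by exact_mod_cast this
  calc b ≤ (2:ℝ) ^ (n:ℕ) := hb2
    _ = (2:ℝ) ^ ((n:ℕ):ℝ) := (Real.rpow_natCast 2 n).symm
    _ ≤ (2:ℝ) ^ ((Ee p:ℝ)/(p:ℝ)) := Real.rpow_le_rpow_of_exponent_le one_le_two hexp

lemma isLC_parts :
    (∀ p, 0 < Mex p) ∧ Mex 0 = 1 ∧ Mex 0 ≤ Mex 1 ∧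
    (∀ p : ℕ, 1 ≤ p → (Mex p) ^ 2 ≤ Mex (p - 1) * Mex (p + 1)) := by
  refine ⟨Mex_pos, ?_, Mex_mono (by omega), ?_⟩
  · show (2:ℝ) ^ (Ee 0) = 1
    have : Ee 0 = 0 := rfl
    rw [this, pow_zero]
  · intro p hp
    obtain ⟨m, rfl⟩ : ∃ m, p = m + 1 := ⟨p - 1, by omega⟩
    have hE : Ee (m + 1) * 2 ≤ Ee (m + 1 - 1) + Ee (m + 1 + 1) := by
      have h1 : Ee (m + 1) = Ee m + sl (m + 1) := Ee_succ m
      have h2 : Ee (m + 2) = Ee (m + 1) + sl (m + 2) := Ee_succ (m + 1)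
      have h3 : sl (m + 1) ≤ sl (m + 2) := sl_mono (by omega)
      have : m + 1 - 1 = m := by omega
      rw [this]
      have h4 : Ee (m + 1 + 1) = Ee (m + 2) := rfl
      omega
    calc (Mex (m+1)) ^ 2 = (2:ℝ) ^ (Ee (m+1) * 2) := by rw [Mex, ← pow_mul]
      _ ≤ (2:ℝ) ^ (Ee (m + 1 - 1) + Ee (m + 1 + 1)) := pow_le_pow_right₀ one_le_two hE
      _ = Mex (m + 1 - 1) * Mex (m + 1 + 1) := by rw [Mex, Mex, pow_add]

lemma keyUB (k : ℕ) (hk : 1 ≤ k) :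
    Ee (2 * 2 ^ (k*k + 2*k - 1)) ≤ 2 * Ee (2 ^ (k*k + 2*k - 1)) + 32 * 2 ^ (k*k + 2*k - 1) := by
  have hkk : 1 ≤ k * k := Nat.one_le_iff_ne_zero.2 (by positivity)
  set p := 2 ^ (k*k + 2*k - 1) with hp
  set a := 2 ^ (k*k) with ha
  set v := 4 ^ (k + 2) with hv
  have hap : a ≤ p := Nat.pow_le_pow_right (by norm_num) (by omega)
  have hp1 : 1 ≤ p := Nat.one_le_two_pow
  have h2p : 2 * p = 2 ^ (k*k + 2*k) := by
    rw [hp, ← pow_succ']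
    congr 1
    omega
  have hub : ∀ i, i < p → sl (p + i + 1) ≤ v := by
    intro i hi
    have hle : p + i + 1 ≤ 2 ^ (k*k + 2*k) := by omega
    have hlog : Nat.log 2 (p + i + 1) ≤ k*k + 2*k := by
      have := Nat.log_mono_right (b := 2) hle
      rwa [Nat.log_pow one_lt_two] at this
    have hsq : Nat.sqrt (Nat.log 2 (p + i + 1)) < k + 1 := by
      apply Nat.sqrt_lt'.2
      have : (k+1)^2 = k*k + 2*k + 1 := by ring
      omega
    exact Nat.pow_le_pow_right (by norm_num) (by omega)
  have hSf : Ee (2 * p) ≤ Ee p + p * v := by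
    rw [two_mul, Ee_add]
    have := Finset.sum_le_card_nsmul (Finset.range p) (fun i => sl (p + i + 1)) v
      (fun i hi => hub i (Finset.mem_range.1 hi))
    simp only [Finset.card_range, smul_eq_mul] at this
    omega
  have hlb : (p - (a - 1)) * v ≤ Ee p := by
    have hsub : Finset.Ico (a - 1) p ⊆ Finset.range p := by
      intro x hx
      rw [Finset.mem_range]
      exact (Finset.mem_Ico.1 hx).2
    have h1 : ∑ i ∈ Finset.Ico (a - 1) p, sl (i + 1) ≤ Ee p :=
      Finset.sum_le_sum_of_subset hsub
    have h2 : (p - (a - 1)) * v ≤ ∑ i ∈ Finset.Ico (a - 1) p, sl (i + 1) := by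
      have ha1 : 1 ≤ a := Nat.one_le_two_pow
      have := Finset.card_nsmul_le_sum (Finset.Ico (a - 1) p) (fun i => sl (i + 1)) v
        (fun i hi => by
          have hi' := (Finset.mem_Ico.1 hi).1
          have hia : a ≤ i + 1 := by omega
          have hlog : k*k ≤ Nat.log 2 (i + 1) :=
            (Nat.le_log_iff_pow_le one_lt_two (by omega)).2 hia
          have hsq : k ≤ Nat.sqrt (Nat.log 2 (i + 1)) := Nat.le_sqrt.2 hlog
          exact Nat.pow_le_pow_right (by norm_num) (by omega))
      simpa [Nat.card_Ico, smul_eq_mul, Nat.mul_comm] using this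
    omega
  have hsum : (p - (a - 1)) * v + (a - 1) * v = p * v := by
    rw [← Nat.add_mul]
    congr 1
    omega
  have hav : (a - 1) * v ≤ 32 * p := by
    have hae : a * v = 32 * p := by
      rw [ha, hv, hp, show (4:ℕ) = 2^2 by norm_num, ← pow_mul, ← pow_add,
        show (32:ℕ) = 2^5 by norm_num, ← pow_add]
      congr 1
      omega
    have : (a - 1) * v ≤ a * v := Nat.mul_le_mul (Nat.sub_le a 1) (le_refl _)
    omega
  omega

lemma ratio_formula (p : ℕ) (hp : 1 ≤ p) :
    (Mex (2*p)) ^ (1/(2*(p:ℝ))) / (Mex p) ^ (1/(p:ℝ))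
      = (2:ℝ) ^ ((Ee (2*p) : ℝ)/(((2*p:ℕ)):ℝ) - (Ee p:ℝ)/(p:ℝ)) := by
  have hcast : (1:ℝ)/(2*(p:ℝ)) = 1/(((2*p : ℕ)):ℝ) := by push_cast; ring
  rw [hcast, root_eq, root_eq, ← Real.rpow_sub two_pos]

lemma ratio_ge (p : ℕ) (hp : 1 ≤ p) :
    (2:ℝ) ≤ (Mex (2*p)) ^ (1/(2*(p:ℝ))) / (Mex p) ^ (1/(p:ℝ)) := by
  rw [ratio_formula p hp]
  have hp0 : (0:ℝ) < p := by exact_mod_cast hp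
  have hkey : 2*(Ee p:ℝ) + 2*(p:ℝ) ≤ (Ee (2*p):ℝ) := by exact_mod_cast key p hp
  have h1 : (1:ℝ) ≤ (Ee (2*p):ℝ)/(((2*p:ℕ)):ℝ) - (Ee p:ℝ)/(p:ℝ) := by
    have hc : (((2*p:ℕ)):ℝ) = 2*(p:ℝ) := by push_cast; ring
    rw [hc]
    have hxp : (Ee p:ℝ)/(p:ℝ) * (p:ℝ) = (Ee p:ℝ) := div_mul_cancel₀ _ (ne_of_gt hp0)
    have h2 : ((1:ℝ) + (Ee p:ℝ)/(p:ℝ)) * (2*(p:ℝ)) ≤ (Ee (2*p):ℝ) := by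
      calc ((1:ℝ) + (Ee p:ℝ)/(p:ℝ)) * (2*(p:ℝ)) = 2*(p:ℝ) + 2*((Ee p:ℝ)/(p:ℝ)*(p:ℝ)) := by ring
        _ = 2*(p:ℝ) + 2*(Ee p:ℝ) := by rw [hxp]
        _ ≤ (Ee (2*p):ℝ) := by linarith
    have h3 : (1:ℝ) + (Ee p:ℝ)/(p:ℝ) ≤ (Ee (2*p):ℝ)/(2*(p:ℝ)) := by
      rw [le_div_iff₀ (by positivity)]
      exact h2
    linarith
  calc (2:ℝ) = 2 ^ (1:ℝ) := (Real.rpow_one 2).symm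
    _ ≤ _ := Real.rpow_le_rpow_of_exponent_le one_le_two h1

lemma ratio_le (k : ℕ) (hk : 1 ≤ k) :
    (Mex (2 * 2^(k*k+2*k-1))) ^ (1/(2*((2^(k*k+2*k-1) : ℕ):ℝ)))
      / (Mex (2^(k*k+2*k-1))) ^ (1/(((2^(k*k+2*k-1):ℕ)):ℝ)) ≤ (2:ℝ)^(16:ℝ) := by
  set p := 2 ^ (k*k+2*k-1) with hp
  have hp1 : 1 ≤ p := Nat.one_le_two_pow
  have hp0 : (0:ℝ) < (p:ℝ) := by exact_mod_cast hp1
  rw [ratio_formula p hp1]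
  apply Real.rpow_le_rpow_of_exponent_le one_le_two
  have hkey : (Ee (2*p):ℝ) ≤ 2*(Ee p:ℝ) + 32*(p:ℝ) := by exact_mod_cast keyUB k hk
  have hc : (((2*p:ℕ)):ℝ) = 2*(p:ℝ) := by push_cast; ring
  rw [hc]
  have hxp : (Ee p:ℝ)/(p:ℝ) * (p:ℝ) = (Ee p:ℝ) := div_mul_cancel₀ _ (ne_of_gt hp0)
  have h3 : (Ee (2*p):ℝ)/(2*(p:ℝ)) ≤ (Ee p:ℝ)/(p:ℝ) + 16 := by
    rw [div_le_iff₀ (by positivity)]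
    calc (Ee (2*p):ℝ) ≤ 2*(Ee p:ℝ) + 32*(p:ℝ) := hkey
      _ = ((Ee p:ℝ)/(p:ℝ) + 16) * (2*(p:ℝ)) := by
          rw [add_mul]
          rw [show (Ee p:ℝ)/(p:ℝ) * (2*(p:ℝ)) = 2*((Ee p:ℝ)/(p:ℝ)*(p:ℝ)) by ring, hxp]
          ring
  linarith

lemma liminf_ratio_ge :
    (2 : ℝ) ≤ Filter.liminf
      (fun p : ℕ => (Mex (2 * p)) ^ (1 / (2 * (p : ℝ))) / (Mex p) ^ (1 / (p : ℝ)))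
      Filter.atTop := by
  have hfreq : ∃ᶠ p in Filter.atTop,
      (Mex (2 * p)) ^ (1 / (2 * (p : ℝ))) / (Mex p) ^ (1 / (p : ℝ)) ≤ (2:ℝ)^(16:ℝ) := by
    rw [Filter.frequently_atTop]
    intro N
    set K := max 1 N with hK
    have hK1 : 1 ≤ K := le_max_left _ _
    have hKK : 1 ≤ K * K := Nat.one_le_iff_ne_zero.2 (by positivity)
    refine ⟨2 ^ (K*K + 2*K - 1), ?_, ratio_le K hK1⟩
    calc N ≤ K := le_max_right _ _
      _ ≤ 2 ^ K := (Nat.lt_two_pow_self (n := K)).le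
      _ ≤ 2 ^ (K*K + 2*K - 1) := Nat.pow_le_pow_right (by norm_num) (by omega)
  refine Filter.le_liminf_of_le (Filter.IsCoboundedUnder.of_frequently_le hfreq) ?_
  filter_upwards [Filter.eventually_ge_atTop 1] with p hp using ratio_ge p hp


lemma Ee_sub_one (p : ℕ) (hp : 1 ≤ p) : Ee p = Ee (p - 1) + sl p := by
  obtain ⟨m, rfl⟩ : ∃ m, p = m + 1 := ⟨p - 1, by omega⟩
  simpa using Ee_succ m

lemma mu_Mex (p : ℕ) (hp : 1 ≤ p) : mu Mex p = (2:ℝ) ^ (sl p) := by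
  rw [mu, if_neg (by omega)]
  rw [show Mex p = (2:ℝ)^(Ee (p-1)) * 2^(sl p) by rw [Mex, Ee_sub_one p hp, pow_add]]
  rw [show Mex (p-1) = (2:ℝ)^(Ee (p-1)) from rfl]
  rw [mul_comm, mul_div_assoc, div_self (by positivity), mul_one]

lemma mu_ratio_ge (Q p : ℕ) (hQ : 1 ≤ Q) : 1 ≤ mu Mex (Q*p) / mu Mex p := by
  rcases Nat.eq_zero_or_pos p with rfl | hp
  · simp [mu]
  · have hQp : 1 ≤ Q * p := Nat.one_le_iff_ne_zero.2 (by positivity)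
    rw [mu_Mex _ hQp, mu_Mex p hp]
    rw [one_le_div (by positivity)]
    exact pow_le_pow_right₀ one_le_two (sl_mono (Nat.le_mul_of_pos_left p hQ))

lemma mu_ratio_eq_one (Q k : ℕ) (hQ : 1 ≤ Q) (hQk : Q ≤ k) :
    mu Mex (Q * 2^(k*k)) / mu Mex (2^(k*k)) = 1 := by
  set p := 2 ^ (k*k) with hpdef
  have hp1 : 1 ≤ p := Nat.one_le_two_pow
  have hQp : 1 ≤ Q * p := Nat.one_le_iff_ne_zero.2 (by positivity)
  have hslp : sl p = 4 ^ (k + 2) := by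
    unfold sl
    rw [hpdef, Nat.log_pow one_lt_two, Nat.sqrt_eq]
  have hslQp : sl (Q * p) = 4 ^ (k + 2) := by
    unfold sl
    have hlow : k*k ≤ Nat.log 2 (Q * p) := by
      apply (Nat.le_log_iff_pow_le one_lt_two (by omega)).2
      calc (2:ℕ)^(k*k) = p := rfl
        _ ≤ Q * p := Nat.le_mul_of_pos_left p (by omega)
    have hhigh : Nat.log 2 (Q * p) < k*k + 2*k + 1 := by
      apply Nat.log_lt_of_lt_pow (by omega)
      have hQ2 : Q < 2 ^ (2*k + 1) := by
        calc Q ≤ k := hQk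
          _ < 2 ^ k := Nat.lt_two_pow_self (n := k)
          _ ≤ 2 ^ (2*k+1) := Nat.pow_le_pow_right (by norm_num) (by omega)
      calc Q * p < 2 ^ (2*k+1) * p := Nat.mul_lt_mul_of_lt_of_le hQ2 (le_refl p) (by omega)
        _ = 2 ^ (k*k + 2*k + 1) := by rw [hpdef, ← pow_add]; congr 1; ring
    have hsq : Nat.sqrt (Nat.log 2 (Q * p)) = k := by
      apply le_antisymm
      · have := Nat.sqrt_lt'.2 (show Nat.log 2 (Q*p) < (k+1)^2 by
          have : (k+1)^2 = k*k + 2*k + 1 := by ring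
          omega)
        omega
      · exact Nat.le_sqrt.2 hlow
    rw [hsq]
  rw [mu_Mex _ hQp, mu_Mex _ hp1, hslQp, hslp, div_self (by positivity)]

lemma liminf_mu_ratio (Q : ℕ) (hQ : 2 ≤ Q) :
    Filter.liminf (fun p : ℕ => mu Mex (Q * p) / mu Mex p) Filter.atTop = 1 := by
  have hQ1 : 1 ≤ Q := by omega
  have hfreq : ∃ᶠ p in Filter.atTop, mu Mex (Q * p) / mu Mex p ≤ 1 := by
    rw [Filter.frequently_atTop]
    intro N
    set K := max Q N with hK
    refine ⟨2 ^ (K*K), ?_, le_of_eq (mu_ratio_eq_one Q K hQ1 (le_max_left _ _))⟩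
    have hKK : K ≤ K * K := Nat.le_mul_of_pos_left K (by omega)
    calc N ≤ K := le_max_right _ _
      _ ≤ 2 ^ K := (Nat.lt_two_pow_self (n := K)).le
      _ ≤ 2 ^ (K*K) := Nat.pow_le_pow_right (by norm_num) hKK
  refine le_antisymm ?_ ?_
  · exact Filter.liminf_le_of_frequently_le hfreq
      (Filter.isBoundedUnder_of ⟨1, fun p => mu_ratio_ge Q p hQ1⟩)
  · exact Filter.le_liminf_of_le (Filter.IsCoboundedUnder.of_frequently_le hfreq)
      (Filter.Eventually.of_forall (fun p => mu_ratio_ge Q p hQ1))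

lemma log_term_bdd (t : ℝ) (ht : 0 < t) :
    BddAbove (Set.range fun p : ℕ => Real.log (t ^ p / Mex p)) := by
  obtain ⟨n, hn⟩ := exists_nat_gt t
  have ht2 : t ≤ (2:ℝ) ^ (n:ℕ) := by
    have h1 : (n:ℝ) < (2:ℝ)^(n:ℕ) := by exact_mod_cast Nat.lt_two_pow_self (n := n)
    linarith
  obtain ⟨N, hN1, hN⟩ := Ee_growth n
  have hle : ∀ p, N ≤ p → Real.log (t ^ p / Mex p) ≤ 0 := by
    intro p hp
    apply Real.log_nonpos (div_nonneg (pow_nonneg ht.le p) (Mex_pos p).le)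
    rw [div_le_one (Mex_pos p)]
    calc t ^ p ≤ ((2:ℝ)^(n:ℕ)) ^ p := pow_le_pow_left₀ ht.le ht2 p
      _ = (2:ℝ) ^ (n * p) := by rw [← pow_mul]
      _ ≤ (2:ℝ) ^ (Ee p) := pow_le_pow_right₀ one_le_two (hN p hp)
  have hsub : Set.range (fun p : ℕ => Real.log (t ^ p / Mex p)) ⊆
      ((fun p : ℕ => Real.log (t ^ p / Mex p)) '' (Set.Iio N)) ∪ Set.Iic 0 := by
    rintro x ⟨p, rfl⟩
    by_cases hp : p < N
    · exact Set.mem_union_left _ ⟨p, hp, rfl⟩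
    · exact Set.mem_union_right _ (hle p (by omega))
  exact (BddAbove.union (((Set.finite_Iio N).image _).bddAbove) bddAbove_Iic).mono hsub

lemma omegaM_nonneg (t : ℝ) (ht : 0 < t) : 0 ≤ omegaM Mex t := by
  rw [omegaM, if_neg (ne_of_gt ht)]
  have h0 : Real.log (t ^ 0 / Mex 0) = 0 := by
    norm_num [Mex, show Ee 0 = 0 from rfl]
  calc (0:ℝ) = Real.log (t ^ 0 / Mex 0) := h0.symm
    _ ≤ _ := le_ciSup (log_term_bdd t ht) 0

lemma omegaM_ge_log (t : ℝ) (ht : 0 < t) :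
    Real.log t - 16 * Real.log 2 ≤ omegaM Mex t := by
  rw [omegaM, if_neg (ne_of_gt ht)]
  have h1 : Real.log (t ^ 1 / Mex 1) = Real.log t - 16 * Real.log 2 := by
    rw [Real.log_div (by positivity) (ne_of_gt (Mex_pos 1)), pow_one]
    congr 1
    rw [show Mex 1 = (2:ℝ)^(16:ℕ) by rw [Mex, Ee_one], Real.log_pow]
    norm_num
  calc _ = Real.log (t ^ 1 / Mex 1) := h1.symm
    _ ≤ _ := le_ciSup (log_term_bdd t ht) 1

lemma log_term_le (t : ℝ) (ht : 0 < t) (p : ℕ) :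
    Real.log (t ^ p / Mex p) ≤ omegaM Mex t := by
  rw [omegaM, if_neg (ne_of_gt ht)]
  exact le_ciSup (log_term_bdd t ht) p

lemma even_bound (t : ℝ) (ht : 0 < t) (q : ℕ) :
    Real.log ((2*t) ^ (2*q) / Mex (2*q)) ≤ 2 * omegaM Mex t := by
  rcases Nat.eq_zero_or_pos q with rfl | hq
  · have h1 : (2*t)^(2*0)/Mex (2*0) = 1 := by
      norm_num [Mex, show Ee 0 = 0 from rfl]
    rw [h1, Real.log_one]
    linarith [omegaM_nonneg t ht]
  · have hM : (4:ℝ)^q * (Mex q)^2 ≤ Mex (2*q) := by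
      have hE : 2*q + Ee q * 2 ≤ Ee (2*q) := by have := key q hq; omega
      calc (4:ℝ)^q * (Mex q)^2 = 2^(2*q) * 2^(Ee q * 2) := by
            rw [show (4:ℝ) = 2^2 by norm_num, ← pow_mul, Mex, ← pow_mul]
        _ = 2 ^ (2*q + Ee q * 2) := by rw [pow_add]
        _ ≤ 2 ^ (Ee (2*q)) := pow_le_pow_right₀ one_le_two hE
    have hnum : (2*t)^(2*q) = (4:ℝ)^q * (t^q)^2 := by
      rw [mul_pow, show (4:ℝ) = 2^2 by norm_num, ← pow_mul, ← pow_mul,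
        show 2*q = q*2 by ring, pow_mul t q 2]
    have hstep : (2*t) ^ (2*q) / Mex (2*q) ≤ (t^q / Mex q)^2 := by
      have h4 : (4:ℝ)^q ≠ 0 := by positivity
      calc (2*t)^(2*q)/Mex (2*q) ≤ (2*t)^(2*q)/((4:ℝ)^q * (Mex q)^2) :=
            div_le_div_of_nonneg_left (pow_nonneg (by linarith) _)
              (mul_pos (by positivity) (pow_pos (Mex_pos q) 2)) hM
        _ = (t^q/Mex q)^2 := by
            rw [hnum, div_pow, mul_div_mul_left _ _ h4]
    calc Real.log ((2*t) ^ (2*q) / Mex (2*q)) ≤ Real.log ((t^q/Mex q)^2) :=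
          Real.log_le_log (div_pos (pow_pos (by linarith) _) (Mex_pos _)) hstep
      _ = 2 * Real.log (t^q/Mex q) := by rw [Real.log_pow]; norm_num
      _ ≤ 2 * omegaM Mex t := by linarith [log_term_le t ht q]

lemma omega_bound (t : ℝ) (ht : 0 < t) :
    omegaM Mex (2*t) ≤ 3 * omegaM Mex t + 17 * Real.log 2 := by
  have h2t : (0:ℝ) < 2*t := by linarith
  rw [omegaM, if_neg (ne_of_gt h2t)]
  apply ciSup_le
  intro p
  have hw0 := omegaM_nonneg t ht
  have hlog2 : (0:ℝ) ≤ Real.log 2 := Real.log_nonneg one_le_two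
  rcases Nat.even_or_odd p with ⟨q, hq⟩ | ⟨q, hq⟩
  · rw [hq, show q + q = 2*q by ring]
    calc Real.log ((2*t)^(2*q)/Mex (2*q)) ≤ 2 * omegaM Mex t := even_bound t ht q
      _ ≤ 3 * omegaM Mex t + 17 * Real.log 2 := by linarith
  · rw [hq]
    have hMmono : Mex (2*q) ≤ Mex (2*q+1) := Mex_mono (by omega)
    have hstep : (2*t)^(2*q+1)/Mex (2*q+1) ≤ (2*t) * ((2*t)^(2*q)/Mex (2*q)) := by
      rw [pow_succ, mul_comm ((2*t)^(2*q)) (2*t), mul_div_assoc]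
      apply mul_le_mul_of_nonneg_left ?_ (le_of_lt h2t)
      exact div_le_div_of_nonneg_left (pow_nonneg (by linarith) _) (Mex_pos _) hMmono
    calc Real.log ((2*t)^(2*q+1)/Mex (2*q+1))
        ≤ Real.log ((2*t) * ((2*t)^(2*q)/Mex (2*q))) :=
          Real.log_le_log (div_pos (pow_pos h2t _) (Mex_pos _)) hstep
      _ = Real.log (2*t) + Real.log ((2*t)^(2*q)/Mex (2*q)) :=
          Real.log_mul (ne_of_gt h2t) (ne_of_gt (div_pos (pow_pos h2t _) (Mex_pos _)))
      _ = Real.log 2 + Real.log t + Real.log ((2*t)^(2*q)/Mex (2*q)) := by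
          rw [Real.log_mul two_ne_zero (ne_of_gt ht)]
      _ ≤ Real.log 2 + (omegaM Mex t + 16*Real.log 2) + 2 * omegaM Mex t := by
          have h1 := omegaM_ge_log t ht
          have h2 := even_bound t ht q
          linarith
      _ = 3 * omegaM Mex t + 17 * Real.log 2 := by ring

lemma omega1_holds : ∃ L : ℝ, 1 ≤ L ∧ ∀ t : ℝ, 0 ≤ t →
    omegaM Mex (2 * t) ≤ L * (omegaM Mex t + 1) := by
  refine ⟨15, by norm_num, ?_⟩
  intro t ht
  rcases eq_or_lt_of_le ht with rfl | htpos
  · norm_num [omegaM]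
  · have hb := omega_bound t htpos
    have hw0 := omegaM_nonneg t htpos
    have hl2 := Real.log_two_lt_d9
    linarith

/-- Example 3.5: a sequence `M ∈ LC` whose associated weight has `(ω1)` while
`(β3)` fails. -/
theorem stmt8 : ∃ M : ℕ → ℝ, IsLC M ∧
    (2 : ℝ) ≤ Filter.liminf
      (fun p : ℕ => (M (2 * p)) ^ (1 / (2 * (p : ℝ))) / (M p) ^ (1 / (p : ℝ)))
      Filter.atTop ∧
    Omega1 (omegaM M) ∧
    (∀ Q : ℕ, 2 ≤ Q →
      Filter.liminf (fun p : ℕ => mu M (Q * p) / mu M p) Filter.atTop = 1) := by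
  refine ⟨Mex, ?_, liminf_ratio_ge, omega1_holds, fun Q hQ => liminf_mu_ratio Q hQ⟩
  obtain ⟨h1, h2, h3, h4⟩ := isLC_parts
  exact ⟨h1, h2, h3, h4, root_tendsto⟩
end

section
/- Let M : ℕ → ℝ be a weight sequence in the class LC, with m_p := M_p/p!, and let M_{ω_M} = {M^{(l)} : l > 0} be the weight matrix associated with ω_M. Then the following are equivalent: (i) M_{ω_M} satisfies the Roumieu root-almost-increasing condition (M_{rai}); (ii) m satisfies the truncated condition: there exist A ≥ 1 and a positive integer C such that (m_p)^{1/p} ≤ A·(m_q)^{1/q} for all p ≥ 1 and all q ≥ C·p. -/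
open Filter Real Asymptotics

section stmt11aux
variable {M : ℕ → ℝ}

lemma lc_step (hM : IsLC M) (j : ℕ) : (M (j+1))^2 ≤ M j * M (j+2) := by
  have := hM.2.2.2.1 (j+1) (by omega)
  simpa using this

lemma qmono (hM : IsLC M) : ∀ i j, i ≤ j → M (i+1) * M j ≤ M i * M (j+1) := by
  intro i j hij
  induction j, hij using Nat.le_induction with
  | base => ring_nf; exact le_refl _
  | succ j hij ih =>
      have lc := lc_step hM j
      have h0 := hM.1 i
      have h1 := hM.1 (i+1)
      have h2 := hM.1 j
      have h3 := hM.1 (j+1)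
      have h4 := hM.1 (j+2)
      nlinarith [mul_pos h0 h1, mul_pos h2 h3]

lemma M_one_le (hM : IsLC M) : 1 ≤ M 1 := hM.2.1 ▸ hM.2.2.1

lemma M_succ_le (hM : IsLC M) (j : ℕ) : M j ≤ M (j+1) := by
  have h := qmono hM 0 j (Nat.zero_le j)
  rw [hM.2.1] at h
  have h1 := M_one_le hM
  have h2 := hM.1 j
  nlinarith

lemma M_mono (hM : IsLC M) : Monotone M := monotone_nat_of_le_succ (M_succ_le hM)

lemma M_ge_one (hM : IsLC M) (j : ℕ) : 1 ≤ M j := by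
  have := M_mono hM (Nat.zero_le j); rw [hM.2.1] at this; linarith

lemma M_log_nonneg (hM : IsLC M) (j : ℕ) : 0 ≤ Real.log (M j) :=
  Real.log_nonneg (M_ge_one hM j)

lemma t_ge_one (hM : IsLC M) (p : ℕ) : 1 ≤ M (p+1) / M p := by
  have h := qmono hM 0 p (Nat.zero_le p)
  rw [hM.2.1, one_mul] at h
  have := M_one_le hM
  have hp := hM.1 p
  rw [le_div_iff₀ hp]
  nlinarith [M_ge_one hM p]

/-- Key log-convexity inequality: with `t = M_{p+1}/M_p`, `t^j M_p ≤ t^p M_j`. -/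

lemma key_mul (hM : IsLC M) (p : ℕ) :
    ∀ j, (M (p+1)/M p)^j * M p ≤ (M (p+1)/M p)^p * M j := by
  set t := M (p+1)/M p with ht
  have htpos : 0 < t := lt_of_lt_of_le one_pos (t_ge_one hM p)
  -- case j ≥ p
  have up : ∀ j, p ≤ j → t^j * M p ≤ t^p * M j := by
    intro j hj
    induction j, hj using Nat.le_induction with
    | base => exact le_refl _
    | succ j hj ih =>
        have hq : M (p+1) * M j ≤ M p * M (j+1) := qmono hM p j hj
        have htm : t * M j ≤ M (j+1) := by
          rw [ht, div_mul_eq_mul_div, div_le_iff₀ (hM.1 p)]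
          nlinarith
        calc t^(j+1) * M p = t * (t^j * M p) := by ring
          _ ≤ t * (t^p * M j) := by nlinarith [pow_pos htpos j, hM.1 p]
          _ = t^p * (t * M j) := by ring
          _ ≤ t^p * M (j+1) := by nlinarith [pow_pos htpos p]
  -- case j ≤ p, downward
  have down : ∀ d, d ≤ p → t^(p-d) * M p ≤ t^p * M (p-d) := by
    intro d hd
    induction d with
    | zero => simp
    | succ d ih =>
        have hd' : d ≤ p := by omega
        have ih' := ih hd'
        set j := p - (d+1) with hj
        have hjp : j + 1 = p - d := by omega
        have hjle : j ≤ p := by omega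
        have hq : M (j+1) * M p ≤ M j * M (p+1) := by
          have := qmono hM j p hjle
          nlinarith
        have htm : M (j+1) ≤ t * M j := by
          rw [ht, div_mul_eq_mul_div, le_div_iff₀ (hM.1 p)]
          nlinarith
        rw [← hjp] at ih'
        have step : t^(j+1) * M p ≤ t^p * (t * M j) :=
          le_trans ih' (by nlinarith [pow_pos htpos p])
        have : t * (t^j * M p) ≤ t * (t^p * M j) := by
          calc t * (t^j * M p) = t^(j+1) * M p := by ring
            _ ≤ t^p * (t * M j) := step
            _ = t * (t^p * M j) := by ring
        exact le_of_mul_le_mul_left this htpos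
  intro j
  rcases le_or_gt p j with h | h
  · exact up j h
  · have := down (p - j) (by omega)
    have hpj : p - (p - j) = j := by omega
    rwa [hpj] at this

/-- log version: for `x₀ = log(M_{p+1}/M_p)`, `j x₀ - log M_j ≤ p x₀ - log M_p`. -/

lemma key_log (hM : IsLC M) (p j : ℕ) :
    (j:ℝ) * Real.log (M (p+1)/M p) - Real.log (M j)
      ≤ (p:ℝ) * Real.log (M (p+1)/M p) - Real.log (M p) := by
  set t := M (p+1)/M p with ht
  have htpos : 0 < t := lt_of_lt_of_le one_pos (t_ge_one hM p)
  have h := key_mul hM p j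
  have h2 := Real.log_le_log (mul_pos (pow_pos htpos j) (hM.1 p)) h
  rw [Real.log_mul (ne_of_gt (pow_pos htpos j)) (ne_of_gt (hM.1 p)),
      Real.log_mul (ne_of_gt (pow_pos htpos p)) (ne_of_gt (hM.1 j)),
      Real.log_pow, Real.log_pow] at h2
  linarith

lemma omega_exp (hM : IsLC M) (x : ℝ) :
    omegaM M (Real.exp x) = ⨆ j : ℕ, ((j:ℝ) * x - Real.log (M j)) := by
  rw [omegaM, if_neg (Real.exp_ne_zero x)]
  congr 1; funext j
  rw [Real.log_div (pow_ne_zero j (Real.exp_ne_zero x)) (ne_of_gt (hM.1 j)),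
      Real.log_pow, Real.log_exp]

lemma bddF (hM : IsLC M) (x : ℝ) :
    BddAbove (Set.range fun j : ℕ => (j:ℝ) * x - Real.log (M j)) := by
  have hlim := hM.2.2.2.2
  obtain ⟨N, hN⟩ := (hlim.eventually_ge_atTop (Real.exp (|x| + 1))).exists_forall_of_atTop
  set N' := max N 1 with hN'
  refine ⟨(N':ℝ) * |x|, ?_⟩
  rintro a ⟨j, rfl⟩
  simp only
  rcases lt_or_ge j N' with hj | hj
  · have h1 : (j:ℝ) * x ≤ (j:ℝ) * |x| := by
      have := le_abs_self x
      have : (j:ℝ) ≥ 0 := Nat.cast_nonneg j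
      nlinarith [le_abs_self x, (Nat.cast_nonneg j : (0:ℝ) ≤ j)]
    have h2 : (j:ℝ) * |x| ≤ (N':ℝ) * |x| := by
      have : (j:ℝ) ≤ N' := Nat.cast_le.mpr (le_of_lt hj)
      nlinarith [abs_nonneg x]
    have := M_log_nonneg hM j
    linarith
  · have hj1 : 1 ≤ j := le_trans (le_max_right N 1) hj
    have hjN : N ≤ j := le_trans (le_max_left N 1) hj
    have hr := hN j hjN
    have hjpos : (0:ℝ) < j := by exact_mod_cast hj1
    have hMj : 0 < M j := hM.1 j
    -- (M j) ^ (1/j) ≥ exp(|x|+1)  ⇒ log M j ≥ j(|x|+1)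
    have hlog : (|x| + 1) ≤ (1 / (j:ℝ)) * Real.log (M j) := by
      have := Real.log_le_log (Real.exp_pos _) hr
      rwa [Real.log_exp, Real.log_rpow hMj] at this
    have hlog' : (j:ℝ) * (|x| + 1) ≤ Real.log (M j) := by
      rw [div_mul_eq_mul_div, one_mul] at hlog
      rw [le_div_iff₀ hjpos] at hlog
      linarith [hlog]
    have : (j:ℝ) * x - Real.log (M j) ≤ 0 := by
      nlinarith [le_abs_self x, (Nat.cast_nonneg j : (0:ℝ) ≤ j)]
    have : (0:ℝ) ≤ (N':ℝ) * |x| := by positivity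
    linarith

lemma phi_ge (hM : IsLC M) (x : ℝ) (j : ℕ) :
    (j:ℝ) * x - Real.log (M j) ≤ omegaM M (Real.exp x) := by
  rw [omega_exp hM x]
  exact le_ciSup (bddF hM x) j

lemma phi_nonneg (hM : IsLC M) (x : ℝ) : 0 ≤ omegaM M (Real.exp x) := by
  have := phi_ge hM x 0
  simpa [hM.2.1] using this

lemma phi_zero (hM : IsLC M) : omegaM M (Real.exp 0) = 0 := by
  refine le_antisymm ?_ (phi_nonneg hM 0)
  rw [omega_exp hM 0]
  exact ciSup_le fun j => by simpa using M_log_nonneg hM j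

/-- at `x₀ = log(M_{p+1}/M_p)`, the sup is attained at `p`. -/

lemma phi_eval (hM : IsLC M) (p : ℕ) :
    omegaM M (Real.exp (Real.log (M (p+1)/M p)))
      = (p:ℝ) * Real.log (M (p+1)/M p) - Real.log (M p) := by
  rw [omega_exp hM]
  exact le_antisymm (ciSup_le fun j => key_log hM p j)
    (le_ciSup (bddF hM _) p)

lemma phiStar_bdd (hM : IsLC M) {y : ℝ} (hy : 0 ≤ y) :
    BddAbove ((fun x => x * y - omegaM M (Real.exp x)) '' Set.Ici (0:ℝ)) := by
  refine ⟨Real.log (M ⌈y⌉₊), ?_⟩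
  rintro a ⟨x, hx, rfl⟩
  simp only
  have h1 := phi_ge hM x ⌈y⌉₊
  have h2 : y ≤ (⌈y⌉₊ : ℝ) := Nat.le_ceil y
  have hx0 : (0:ℝ) ≤ x := hx
  nlinarith

lemma phiStar_nonempty : ((fun x => x * y - omegaM M (Real.exp x)) '' Set.Ici (0:ℝ)).Nonempty :=
  ⟨_, Set.mem_image_of_mem _ (le_refl (0:ℝ))⟩

lemma phiStar_nonneg (hM : IsLC M) {y : ℝ} (hy : 0 ≤ y) : 0 ≤ phiStar M y := by
  have : (0:ℝ) = 0 * y - omegaM M (Real.exp 0) := by rw [phi_zero hM]; ring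
  rw [this]
  exact le_csSup (phiStar_bdd hM hy) (Set.mem_image_of_mem _ (le_refl (0:ℝ)))

lemma phiStar_nat (hM : IsLC M) (n : ℕ) : phiStar M n = Real.log (M n) := by
  refine le_antisymm ?_ ?_
  · refine csSup_le phiStar_nonempty ?_
    rintro a ⟨x, hx, rfl⟩
    have := phi_ge hM x n
    simp only
    linarith [this, mul_comm x (n:ℝ)]
  · set x₀ := Real.log (M (n+1)/M n) with hx0
    have hx0n : 0 ≤ x₀ := Real.log_nonneg (t_ge_one hM n)
    have : Real.log (M n) = x₀ * n - omegaM M (Real.exp x₀) := by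
      rw [phi_eval hM n]; ring
    rw [this]
    exact le_csSup (phiStar_bdd hM (Nat.cast_nonneg n)) (Set.mem_image_of_mem _ hx0n)

lemma phiStar_div_mono (hM : IsLC M) {s t : ℝ} (hs : 0 < s) (hst : s ≤ t) :
    phiStar M s ≤ (s/t) * phiStar M t := by
  have ht : 0 < t := lt_of_lt_of_le hs hst
  refine csSup_le phiStar_nonempty ?_
  rintro a ⟨x, hx, rfl⟩
  have hx0 : (0:ℝ) ≤ x := hx
  have hmem : x * t - omegaM M (Real.exp x) ≤ phiStar M t :=
    le_csSup (phiStar_bdd hM (le_of_lt ht)) (Set.mem_image_of_mem _ hx0)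
  have hphi := phi_nonneg hM x
  have hdiv : s/t ≤ 1 := div_le_one_of_le₀ hst (le_of_lt ht)
  have hdiv0 : 0 < s/t := div_pos hs ht
  have step : x * s - omegaM M (Real.exp x) ≤ (s/t) * (x * t - omegaM M (Real.exp x)) := by
    have hxs : x * s = (s/t) * (x * t) := by field_simp
    nlinarith
  calc x * s - omegaM M (Real.exp x) ≤ (s/t) * (x * t - omegaM M (Real.exp x)) := step
    _ ≤ (s/t) * phiStar M t := by nlinarith

/-- `(q!)^n ≤ (n q)!` -/

lemma fact_pow_le (n q : ℕ) : (q.factorial) ^ n ≤ (n * q).factorial := by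
  induction n with
  | zero => simpa using Nat.one_le_iff_ne_zero.mpr (Nat.factorial_ne_zero 0)
  | succ n ih =>
      have h := Nat.factorial_mul_factorial_dvd_factorial_add (n*q) q
      have h2 : (n*q).factorial * q.factorial ≤ ((n+1)*q).factorial := by
        have := Nat.le_of_dvd (Nat.factorial_pos _) h
        have e : n*q + q = (n+1)*q := by ring
        rwa [e] at this
      calc q.factorial ^ (n+1) = q.factorial ^ n * q.factorial := by ring
        _ ≤ (n*q).factorial * q.factorial :=
            Nat.mul_le_mul_right _ ih
        _ ≤ ((n+1)*q).factorial := h2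

/-- `n^n ≤ e^n n!` -/

lemma pow_le_exp_fact (n : ℕ) : (n:ℝ)^n ≤ Real.exp n * n.factorial := by
  induction n with
  | zero => simp
  | succ n ih =>
      have key : ((n:ℝ)+1)^n ≤ Real.exp 1 * (n:ℝ)^n := by
        rcases Nat.eq_zero_or_pos n with h | h
        · subst h; simpa using Real.one_le_exp (le_refl 1) |>.trans (le_of_eq (by ring))
        · have hn : (0:ℝ) < n := by exact_mod_cast h
          have h1 : (n:ℝ)+1 = (1 + 1/n) * n := by field_simp
          have h2 : (1 + 1/(n:ℝ)) ≤ Real.exp (1/n) := by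
            have := Real.add_one_le_exp (1/(n:ℝ)); linarith
          have h3 : (1 + 1/(n:ℝ))^n ≤ Real.exp (1/n) ^ n :=
            pow_le_pow_left₀ (by positivity) h2 n
          have h4 : Real.exp (1/(n:ℝ)) ^ n = Real.exp 1 := by
            rw [← Real.exp_nat_mul]
            congr 1; field_simp
          calc ((n:ℝ)+1)^n = (1 + 1/(n:ℝ))^n * (n:ℝ)^n := by rw [h1, mul_pow]
            _ ≤ Real.exp 1 * (n:ℝ)^n := by
                rw [← h4]; exact mul_le_mul_of_nonneg_right h3 (by positivity)
      have hf : (0:ℝ) < n.factorial := by exact_mod_cast Nat.factorial_pos n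
      have main : ((n:ℝ)+1)^(n+1) ≤ Real.exp ((n:ℝ)+1) * (((n+1).factorial : ℕ) : ℝ) := by
        calc ((n:ℝ)+1)^(n+1) = ((n:ℝ)+1) * ((n:ℝ)+1)^n := by ring
          _ ≤ ((n:ℝ)+1) * (Real.exp 1 * (n:ℝ)^n) :=
              mul_le_mul_of_nonneg_left key (by positivity)
          _ ≤ ((n:ℝ)+1) * (Real.exp 1 * (Real.exp n * n.factorial)) :=
              mul_le_mul_of_nonneg_left
                (mul_le_mul_of_nonneg_left ih (le_of_lt (Real.exp_pos 1)))
                (by positivity)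
          _ = Real.exp ((n:ℝ)+1) * (((n:ℝ)+1) * n.factorial) := by
              rw [Real.exp_add]; ring
          _ = Real.exp ((n:ℝ)+1) * (((n+1).factorial : ℕ) : ℝ) := by
              rw [Nat.factorial_succ]; push_cast; ring
      push_cast
      push_cast at main
      exact main

/-- `(q!)^{1/q} ≤ q` for `q ≥ 1`. -/

lemma root_fact_le {q : ℕ} (hq : 1 ≤ q) : ((q.factorial : ℝ)) ^ (1/(q:ℝ)) ≤ q := by
  have hq0 : (0:ℝ) < q := by exact_mod_cast hq
  have h : (q.factorial : ℝ) ≤ (q:ℝ)^q := by exact_mod_cast Nat.factorial_le_pow q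
  have := Real.rpow_le_rpow (by positivity) h (by positivity : (0:ℝ) ≤ 1/(q:ℝ))
  calc ((q.factorial : ℝ)) ^ (1/(q:ℝ)) ≤ ((q:ℝ)^q) ^ (1/(q:ℝ)) := this
    _ = (q:ℝ) := by
        rw [← Real.rpow_natCast (q:ℝ) q, ← Real.rpow_mul (le_of_lt hq0),
            mul_one_div, div_self (ne_of_gt hq0), Real.rpow_one]

/-- `q ≤ e (q!)^{1/q}` for `q ≥ 1`. -/

lemma root_fact_ge {q : ℕ} (hq : 1 ≤ q) :
    (q:ℝ) ≤ Real.exp 1 * ((q.factorial : ℝ)) ^ (1/(q:ℝ)) := by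
  have hq0 : (0:ℝ) < q := by exact_mod_cast hq
  have h := pow_le_exp_fact q
  have h2 := Real.rpow_le_rpow (by positivity) h (by positivity : (0:ℝ) ≤ 1/(q:ℝ))
  have e1 : ((q:ℝ)^q : ℝ) ^ (1/(q:ℝ)) = (q:ℝ) := by
    rw [← Real.rpow_natCast (q:ℝ) q, ← Real.rpow_mul (le_of_lt hq0),
        mul_one_div, div_self (ne_of_gt hq0), Real.rpow_one]
  have e2 : (Real.exp q * q.factorial) ^ (1/(q:ℝ))
      = Real.exp 1 * ((q.factorial : ℝ)) ^ (1/(q:ℝ)) := by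
    rw [Real.mul_rpow (le_of_lt (Real.exp_pos _)) (by positivity)]
    congr 1
    rw [← Real.exp_one_rpow (q:ℝ), ← Real.rpow_mul (le_of_lt (Real.exp_pos 1)),
        mul_one_div, div_self (ne_of_gt hq0), Real.rpow_one]
  rw [e1, e2] at h2; exact h2

/-- `M^{(k)}_p = M_{kp}^{1/k}` for integer `k ≥ 1`. -/

lemma MMat_nat (hM : IsLC M) {k : ℕ} (hk : 1 ≤ k) (p : ℕ) :
    MMat M k p = (M (k*p)) ^ ((k:ℝ)⁻¹) := by
  have hk0 : (0:ℝ) < k := by exact_mod_cast hk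
  have hc : ((k:ℝ) * (p:ℝ)) = ((k*p : ℕ) : ℝ) := by push_cast; ring
  rw [MMat, hc, phiStar_nat hM (k*p),
      Real.rpow_def_of_pos (hM.1 (k*p))]
  congr 1; ring

/-- monotonicity in `l` for `p ≥ 1`. -/

lemma MMat_mono (hM : IsLC M) {l l' : ℝ} (hl : 0 < l) (hll : l ≤ l') {p : ℕ} (hp : 1 ≤ p) :
    MMat M l p ≤ MMat M l' p := by
  have hp0 : (0:ℝ) < p := by exact_mod_cast hp
  have hl' : 0 < l' := lt_of_lt_of_le hl hll
  apply Real.exp_le_exp.mpr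
  have h := phiStar_div_mono hM (mul_pos hl hp0) (mul_le_mul_of_nonneg_right hll (le_of_lt hp0))
  have e : (l * (p:ℝ))/(l' * p) * phiStar M (l' * p) = (l/l') * phiStar M (l' * p) := by
    rw [mul_div_mul_right _ _ (ne_of_gt hp0)]
  rw [e] at h
  calc (1/l) * phiStar M (l * p) ≤ (1/l) * ((l/l') * phiStar M (l' * p)) := by
        have : (0:ℝ) < 1/l := by positivity
        nlinarith
    _ = (1/l') * phiStar M (l' * p) := by field_simp

lemma MMat_pos (M : ℕ → ℝ) (l : ℝ) (p : ℕ) : 0 < MMat M l p := Real.exp_pos _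

lemma mMat_pos (M : ℕ → ℝ) (l : ℝ) (p : ℕ) : 0 < mMat M l p :=
  div_pos (MMat_pos M l p) (by exact_mod_cast Nat.factorial_pos p)

lemma mseq_pos (hM : IsLC M) (p : ℕ) : 0 < mseq M p :=
  div_pos (hM.1 p) (by exact_mod_cast Nat.factorial_pos p)

/-- root of `mMat` at an integer index. -/

lemma mMat_nat_root (hM : IsLC M) {k p : ℕ} (hk : 1 ≤ k) (hp : 1 ≤ p) :
    (mMat M k p) ^ (1/(p:ℝ))
      = (M (k*p)) ^ (1/((k*p:ℕ):ℝ)) / ((p.factorial:ℝ)) ^ (1/(p:ℝ)) := by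
  have hk0 : (0:ℝ) < k := by exact_mod_cast hk
  have hp0 : (0:ℝ) < p := by exact_mod_cast hp
  have hf : (0:ℝ) < (p.factorial:ℝ) := by exact_mod_cast Nat.factorial_pos p
  rw [mMat, MMat_nat hM hk, Real.div_rpow (Real.rpow_nonneg (le_of_lt (hM.1 (k*p))) _) (le_of_lt hf)]
  congr 1
  rw [← Real.rpow_mul (le_of_lt (hM.1 (k*p)))]
  congr 1
  push_cast
  field_simp

/-- root of `mseq`. -/

lemma mseq_root (hM : IsLC M) {q : ℕ} (hq : 1 ≤ q) :
    (mseq M q) ^ (1/(q:ℝ)) = (M q) ^ (1/(q:ℝ)) / ((q.factorial:ℝ)) ^ (1/(q:ℝ)) := by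
  rw [mseq, Real.div_rpow (le_of_lt (hM.1 q)) (by positivity)]

/-- `mMat M 1 p = mseq M p`. -/

lemma mMat_one (hM : IsLC M) (p : ℕ) : mMat M 1 p = mseq M p := by
  rw [mMat, mseq, MMat]
  have : (1:ℝ) * (p:ℝ) = ((p:ℕ):ℝ) := by push_cast; ring
  rw [this, phiStar_nat hM p]
  norm_num [Real.exp_log (hM.1 p)]

lemma aux_div {a F G c : ℝ} (ha : 0 < a) (hF : 0 < F) (hG : 0 < G) (h : G ≤ c * F) :
    a / F ≤ c * (a / G) := by
  have e : c * (a/G) = (c*a)/G := by ring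
  rw [e, div_le_div_iff₀ hF hG]
  nlinarith

lemma aux_div2 {a F G : ℝ} (ha : 0 < a) (hF : 0 < F) (hG : 0 < G) (h : F ≤ G) :
    a / G ≤ a / F := by
  rw [div_le_div_iff₀ hG hF]
  nlinarith

lemma dir2 (hM : IsLC M)
    (h : ∃ A : ℝ, 1 ≤ A ∧ ∃ C : ℕ, 1 ≤ C ∧ ∀ p q : ℕ, 1 ≤ p → C * p ≤ q →
      (mseq M p) ^ (1 / (p : ℝ)) ≤ A * (mseq M q) ^ (1 / (q : ℝ))) :
    MRai M := by
  obtain ⟨A, hA, Cn, hCn, htr⟩ := h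
  intro x hx
  set k := ⌈x⌉₊ with hkdef
  have hk1 : 1 ≤ k := Nat.one_le_ceil_iff.mpr hx
  have hxk : x ≤ (k:ℝ) := Nat.le_ceil x
  have hk0 : (0:ℝ) < k := by exact_mod_cast hk1
  set n := Cn * k with hndef
  have hn1 : 1 ≤ n := Nat.one_le_iff_ne_zero.mpr (by positivity)
  have hn0 : (0:ℝ) < n := by exact_mod_cast hn1
  refine ⟨(k:ℝ) * Real.exp 1 * A, by positivity, (n:ℝ), hn0, ?_⟩
  intro p q hp hpq
  have hq : 1 ≤ q := le_trans hp hpq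
  have hp0 : (0:ℝ) < p := by exact_mod_cast hp
  have hq0 : (0:ℝ) < q := by exact_mod_cast hq
  have hkp1 : 1 ≤ k * p := Nat.one_le_iff_ne_zero.mpr (by positivity)
  have hnq1 : 1 ≤ n * q := Nat.one_le_iff_ne_zero.mpr (by positivity)
  have hkp0 : (0:ℝ) < ((k*p:ℕ):ℝ) := by exact_mod_cast hkp1
  have hnq0 : (0:ℝ) < ((n*q:ℕ):ℝ) := by exact_mod_cast hnq1
  have hfp : (0:ℝ) < ((p.factorial:ℕ):ℝ) := by exact_mod_cast Nat.factorial_pos p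
  have hfq : (0:ℝ) < ((q.factorial:ℕ):ℝ) := by exact_mod_cast Nat.factorial_pos q
  have hfkp : (0:ℝ) < ((k*p).factorial:ℝ) := by exact_mod_cast Nat.factorial_pos _
  have hfnq : (0:ℝ) < (((n*q).factorial:ℕ):ℝ) := by exact_mod_cast Nat.factorial_pos _
  -- roots of factorials, positive
  have hrfp : (0:ℝ) < ((p.factorial:ℝ)) ^ (1/(p:ℝ)) := Real.rpow_pos_of_pos hfp _
  have hrfq : (0:ℝ) < ((q.factorial:ℝ)) ^ (1/(q:ℝ)) := Real.rpow_pos_of_pos hfq _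
  have hrfkp : (0:ℝ) < (((k*p).factorial:ℝ)) ^ (1/((k*p:ℕ):ℝ)) := Real.rpow_pos_of_pos hfkp _
  have hMkp : (0:ℝ) < (M (k*p)) ^ (1/((k*p:ℕ):ℝ)) := Real.rpow_pos_of_pos (hM.1 _) _
  have hMnq : (0:ℝ) < (M (n*q)) ^ (1/((n*q:ℕ):ℝ)) := Real.rpow_pos_of_pos (hM.1 _) _
  -- s1 : (mMat x p)^{1/p} ≤ (mMat k p)^{1/p}
  have s1 : (mMat M x p) ^ (1/(p:ℝ)) ≤ (mMat M k p) ^ (1/(p:ℝ)) := by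
    apply Real.rpow_le_rpow (le_of_lt (mMat_pos M x p)) _ (by positivity)
    unfold mMat
    gcongr
    exact MMat_mono hM hx hxk hp
  -- s3 : (mMat k p)^{1/p} ≤ k e * (mseq (k*p))^{1/(kp)}
  have hroot1 : (((k*p).factorial:ℝ)) ^ (1/((k*p:ℕ):ℝ)) ≤
      (k:ℝ) * Real.exp 1 * ((p.factorial:ℝ)) ^ (1/(p:ℝ)) := by
    have h1 : (((k*p).factorial:ℝ)) ^ (1/((k*p:ℕ):ℝ)) ≤ ((k*p:ℕ):ℝ) := root_fact_le hkp1
    have h2 := root_fact_ge hp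
    have e : ((k*p:ℕ):ℝ) = (k:ℝ) * p := by push_cast; ring
    calc (((k*p).factorial:ℝ)) ^ (1/((k*p:ℕ):ℝ)) ≤ (k:ℝ) * p := e ▸ h1
      _ ≤ (k:ℝ) * (Real.exp 1 * ((p.factorial:ℝ)) ^ (1/(p:ℝ))) :=
          mul_le_mul_of_nonneg_left h2 (le_of_lt hk0)
      _ = (k:ℝ) * Real.exp 1 * ((p.factorial:ℝ)) ^ (1/(p:ℝ)) := by ring
  have s3 : (mMat M k p) ^ (1/(p:ℝ)) ≤
      ((k:ℝ) * Real.exp 1) * (mseq M (k*p)) ^ (1/((k*p:ℕ):ℝ)) := by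
    rw [mMat_nat_root hM hk1 hp, mseq_root hM hkp1]
    exact aux_div hMkp hrfp hrfkp hroot1
  -- s4 : truncated condition
  have s4 : (mseq M (k*p)) ^ (1/((k*p:ℕ):ℝ)) ≤ A * (mseq M (n*q)) ^ (1/((n*q:ℕ):ℝ)) := by
    apply htr (k*p) (n*q) hkp1
    calc Cn * (k * p) = (Cn * k) * p := by ring
      _ ≤ (Cn * k) * q := Nat.mul_le_mul_left _ hpq
  -- s5 : (mseq (n*q))^{1/(nq)} ≤ (mMat n q)^{1/q}
  have hroot2 : ((q.factorial:ℝ)) ^ (1/(q:ℝ)) ≤ (((n*q).factorial:ℝ)) ^ (1/((n*q:ℕ):ℝ)) := by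
    have h1 : ((q.factorial:ℝ)) ^ (n:ℕ) ≤ (((n*q).factorial:ℝ)) := by
      exact_mod_cast fact_pow_le n q
    have h2 := Real.rpow_le_rpow (by positivity) h1 (le_of_lt (one_div_pos.mpr hnq0))
    rw [← Real.rpow_natCast ((q.factorial:ℝ)) n, ← Real.rpow_mul (le_of_lt hfq)] at h2
    have e : (n:ℝ) * (1/((n*q:ℕ):ℝ)) = 1/(q:ℝ) := by
      push_cast
      field_simp
    rwa [e] at h2
  have s5 : (mseq M (n*q)) ^ (1/((n*q:ℕ):ℝ)) ≤ (mMat M (n:ℝ) q) ^ (1/(q:ℝ)) := by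
    rw [mseq_root hM hnq1, mMat_nat_root hM hn1 hq]
    exact aux_div2 hMnq hrfq (Real.rpow_pos_of_pos hfnq _) hroot2
  -- combine
  calc (mMat M x p) ^ (1/(p:ℝ))
      ≤ (mMat M k p) ^ (1/(p:ℝ)) := s1
    _ ≤ ((k:ℝ) * Real.exp 1) * (mseq M (k*p)) ^ (1/((k*p:ℕ):ℝ)) := s3
    _ ≤ ((k:ℝ) * Real.exp 1) * (A * (mseq M (n*q)) ^ (1/((n*q:ℕ):ℝ))) :=
        mul_le_mul_of_nonneg_left s4 (by positivity)
    _ ≤ ((k:ℝ) * Real.exp 1) * (A * (mMat M (n:ℝ) q) ^ (1/(q:ℝ))) := by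
        have hA0 : (0:ℝ) < A := lt_of_lt_of_le one_pos hA
        exact mul_le_mul_of_nonneg_left (mul_le_mul_of_nonneg_left s5 (le_of_lt hA0))
          (by positivity)
    _ = (k:ℝ) * Real.exp 1 * A * (mMat M (n:ℝ) q) ^ (1/(q:ℝ)) := by ring

lemma aux_div3 {a F F' c A : ℝ} (ha : 0 < a) (hF : 0 < F) (hF' : 0 < F')
    (h : c * F' ≤ A * F) : c * (a / F) ≤ A * (a / F') := by
  have e1 : c * (a/F) = (c*a)/F := by ring
  have e2 : A * (a/F') = (A*a)/F' := by ring
  rw [e1, e2, div_le_div_iff₀ hF hF']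
  nlinarith

lemma dir1 (hM : IsLC M) (hrai : MRai M) :
    ∃ A : ℝ, 1 ≤ A ∧ ∃ C : ℕ, 1 ≤ C ∧ ∀ p q : ℕ, 1 ≤ p → C * p ≤ q →
      (mseq M p) ^ (1 / (p : ℝ)) ≤ A * (mseq M q) ^ (1 / (q : ℝ)) := by
  obtain ⟨C, hC, y, hy, h⟩ := hrai 1 one_pos
  set B := ⌈y⌉₊ + 1 with hBdef
  have hB1 : 1 ≤ B := by omega
  have hyB : y ≤ (B:ℝ) := le_trans (Nat.le_ceil y) (by exact_mod_cast Nat.le_succ _)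
  have hB0 : (0:ℝ) < B := by exact_mod_cast hB1
  refine ⟨max (C * (2 * B * Real.exp 1)) 1, le_max_right _ _, B * B,
    Nat.one_le_iff_ne_zero.mpr (by positivity), ?_⟩
  intro p q' hp hq'
  set q := q' / B with hqdef
  have hpq : p ≤ q := by
    rw [hqdef, Nat.le_div_iff_mul_le (by omega : 0 < B)]
    calc p * B = 1 * (B * p) := by ring
      _ ≤ B * (B * p) := Nat.mul_le_mul_right _ hB1
      _ = (B * B) * p := by ring
      _ ≤ q' := hq'
  have hq1 : 1 ≤ q := le_trans hp hpq
  have hq'1 : 1 ≤ q' := le_trans (Nat.mul_pos (Nat.mul_pos hB1 hB1) hp) hq'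
  have hBq : B * q ≤ q' := by
    rw [hqdef, mul_comm]
    exact Nat.div_mul_le_self q' B
  have hq'2B : q' ≤ 2 * B * q := by
    have h1 : B * q + q' % B = q' := by rw [hqdef]; exact Nat.div_add_mod q' B
    have h2 : q' % B < B := Nat.mod_lt _ (by omega)
    have h3 : B * 1 ≤ B * q := Nat.mul_le_mul_left _ hq1
    have e : 2 * B * q = 2 * (B * q) := by ring
    rw [e]
    omega
  -- real casts
  have hp0 : (0:ℝ) < p := by exact_mod_cast hp
  have hq0 : (0:ℝ) < q := by exact_mod_cast hq1
  have hq'0 : (0:ℝ) < q' := by exact_mod_cast hq'1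
  have hfq : (0:ℝ) < (q.factorial:ℝ) := by exact_mod_cast Nat.factorial_pos q
  have hfq' : (0:ℝ) < (q'.factorial:ℝ) := by exact_mod_cast Nat.factorial_pos q'
  have hrfq : (0:ℝ) < ((q.factorial:ℝ)) ^ (1/(q:ℝ)) := Real.rpow_pos_of_pos hfq _
  have hrfq' : (0:ℝ) < ((q'.factorial:ℝ)) ^ (1/(q':ℝ)) := Real.rpow_pos_of_pos hfq' _
  have hMq' : (0:ℝ) < (M q') ^ (1/(q':ℝ)) := Real.rpow_pos_of_pos (hM.1 q') _
  -- step 1: use MRai at (p, q)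
  have s1 : (mseq M p) ^ (1/(p:ℝ)) ≤ C * (mMat M y q) ^ (1/(q:ℝ)) := by
    have := h p q hp hpq
    rwa [mMat_one hM p] at this
  -- step 2: (MMat y q)^{1/q} ≤ (M q')^{1/q'}
  have s2 : (MMat M y q) ^ (1/(q:ℝ)) ≤ (M q') ^ (1/(q':ℝ)) := by
    have hyq0 : 0 < y * (q:ℝ) := mul_pos hy hq0
    have hyqq' : y * (q:ℝ) ≤ (q':ℝ) := by
      calc y * (q:ℝ) ≤ (B:ℝ) * q := mul_le_mul_of_nonneg_right hyB (le_of_lt hq0)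
        _ ≤ (q':ℝ) := by exact_mod_cast hBq
    have hphi := phiStar_div_mono hM hyq0 hyqq'
    have hexp : (MMat M y q) ^ (1/(q:ℝ))
        = Real.exp ((1/y) * phiStar M (y * q) * (1/(q:ℝ))) := by
      rw [MMat, Real.rpow_def_of_pos (Real.exp_pos _), Real.log_exp]
    rw [hexp, Real.rpow_def_of_pos (hM.1 q'), ← phiStar_nat hM q']
    apply Real.exp_le_exp.mpr
    have e1 : (1/y) * phiStar M (y * q) * (1/(q:ℝ)) = phiStar M (y*q) * (1/(y*q)) := by
      field_simp
    have e2 : (y * (q:ℝ)/(q':ℝ)) * phiStar M q' * (1/(y*q)) = phiStar M q' * (1/(q':ℝ)) := by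
      field_simp
      try ring
    calc (1/y) * phiStar M (y * q) * (1/(q:ℝ)) = phiStar M (y*q) * (1/(y*q)) := e1
      _ ≤ ((y * (q:ℝ)/(q':ℝ)) * phiStar M q') * (1/(y*q)) :=
          mul_le_mul_of_nonneg_right hphi (by positivity)
      _ = phiStar M q' * (1/(q':ℝ)) := by rw [← e2]
  -- step 3: roots of factorials
  have s3 : C * ((q'.factorial:ℝ)) ^ (1/(q':ℝ))
      ≤ (max (C * (2 * B * Real.exp 1)) 1) * ((q.factorial:ℝ)) ^ (1/(q:ℝ)) := by
    have h1 : ((q'.factorial:ℝ)) ^ (1/(q':ℝ)) ≤ (q':ℝ) := root_fact_le hq'1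
    have h2 : (q':ℝ) ≤ 2 * B * q := by exact_mod_cast hq'2B
    have h3 : (q:ℝ) ≤ Real.exp 1 * ((q.factorial:ℝ)) ^ (1/(q:ℝ)) := root_fact_ge hq1
    have h4 : ((q'.factorial:ℝ)) ^ (1/(q':ℝ)) ≤ 2*B*Real.exp 1 * ((q.factorial:ℝ)) ^ (1/(q:ℝ)) := by
      calc ((q'.factorial:ℝ)) ^ (1/(q':ℝ)) ≤ (q':ℝ) := h1
        _ ≤ 2 * B * q := h2
        _ ≤ 2 * B * (Real.exp 1 * ((q.factorial:ℝ)) ^ (1/(q:ℝ))) := by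
            exact mul_le_mul_of_nonneg_left h3 (by positivity)
        _ = 2*B*Real.exp 1 * ((q.factorial:ℝ)) ^ (1/(q:ℝ)) := by ring
    calc C * ((q'.factorial:ℝ)) ^ (1/(q':ℝ))
        ≤ C * (2*B*Real.exp 1 * ((q.factorial:ℝ)) ^ (1/(q:ℝ))) :=
          mul_le_mul_of_nonneg_left h4 (le_of_lt hC)
      _ = (C * (2*B*Real.exp 1)) * ((q.factorial:ℝ)) ^ (1/(q:ℝ)) := by ring
      _ ≤ (max (C * (2 * B * Real.exp 1)) 1) * ((q.factorial:ℝ)) ^ (1/(q:ℝ)) :=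
          mul_le_mul_of_nonneg_right (le_max_left _ _) (le_of_lt hrfq)
  -- combine
  have mdiv : (mMat M y q) ^ (1/(q:ℝ))
      = (MMat M y q) ^ (1/(q:ℝ)) / ((q.factorial:ℝ)) ^ (1/(q:ℝ)) := by
    have hMM : (0:ℝ) < MMat M y q := Real.exp_pos _
    rw [mMat, Real.div_rpow (le_of_lt hMM) (le_of_lt hfq)]
  calc (mseq M p) ^ (1/(p:ℝ)) ≤ C * (mMat M y q) ^ (1/(q:ℝ)) := s1
    _ = C * ((MMat M y q) ^ (1/(q:ℝ)) / ((q.factorial:ℝ)) ^ (1/(q:ℝ))) := by rw [mdiv]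
    _ ≤ C * ((M q') ^ (1/(q':ℝ)) / ((q.factorial:ℝ)) ^ (1/(q:ℝ))) := by
        apply mul_le_mul_of_nonneg_left _ (le_of_lt hC)
        gcongr
    _ ≤ (max (C * (2 * B * Real.exp 1)) 1) * ((M q') ^ (1/(q':ℝ)) / ((q'.factorial:ℝ)) ^ (1/(q':ℝ))) :=
        aux_div3 hMq' hrfq hrfq' s3
    _ = (max (C * (2 * B * Real.exp 1)) 1) * (mseq M q') ^ (1/(q':ℝ)) := by
        rw [mseq_root hM hq'1]

end stmt11aux

/-- Lemma 4.2: `(M_{rai})` for the matrix associated with `ω_M` is equivalent to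
the truncated root-almost-increasing condition for `m`. -/
theorem stmt11 (M : ℕ → ℝ) (hM : IsLC M) :
    MRai M ↔
    (∃ A : ℝ, 1 ≤ A ∧ ∃ C : ℕ, 1 ≤ C ∧ ∀ p q : ℕ, 1 ≤ p → C * p ≤ q →
      (mseq M p) ^ (1 / (p : ℝ)) ≤ A * (mseq M q) ^ (1 / (q : ℝ))) :=
  ⟨dir1 hM, dir2 hM⟩
end
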